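/- (Expander mixing lemma.) Let G be a finite simple graph on N ≥ 2 vertices in which every vertex has positive degree. Then for all subsets A, B of the vertex set, |e(A,B)/vol([N]) − (vol(A)/vol([N]))(vol(B)/vol([N]))| ≤ λ · √((vol(A)/vol([N])) · (vol(B)/vol([N]))). -/

import Mathlib

open Finset

noncomputable section

/-- Degree of vertex `i`. -/
def deg (N : ℕ) (a : Fin N → Fin N → ℝ) (i : Fin N) : ℝ := ∑ j, a i j

/-- Number of edges between `A` and `B` (ordered pairs). -/
def eCount (N : ℕ) (a : Fin N → Fin N → ℝ) (A B : Finset (Fin N)) : ℝ :=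
  ∑ i ∈ A, ∑ j ∈ B, a i j

/-- Volume of a set of vertices. -/
def vol (N : ℕ) (a : Fin N → Fin N → ℝ) (A : Finset (Fin N)) : ℝ :=
  ∑ i ∈ A, deg N a i

/-- Volume-biased discrepancy `δ̃(A,B)`. -/
def discVol (N : ℕ) (a : Fin N → Fin N → ℝ) (A B : Finset (Fin N)) : ℝ :=
  eCount N a A B / vol N a Finset.univ -
    (vol N a A / vol N a Finset.univ) * (vol N a B / vol N a Finset.univ)

/-- `∂̃ = max_{A,B} |δ̃(A,B)|`. -/
def maxDiscVol (N : ℕ) (a : Fin N → Fin N → ℝ) : ℝ :=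
  Finset.univ.sup' Finset.univ_nonempty
    (fun p : Finset (Fin N) × Finset (Fin N) => |discVol N a p.1 p.2|)

set_option maxHeartbeats 2000000

/-- Expander mixing lemma: for all `A, B ⊆ [N]`,
`|e(A,B)/vol([N]) - (vol(A)/vol([N]))(vol(B)/vol([N]))|
  ≤ λ √((vol(A)/vol([N]))(vol(B)/vol([N])))`,
where `λ = max (λ₂, -λ_N)` for the eigenvalues `λ₁ ≥ … ≥ λ_N` of the
normalized adjacency matrix `D^(-1/2) A D^(-1/2)`. -/
theorem stmt_9 (N : ℕ) (hN : 2 ≤ N) (a : Fin N → Fin N → ℝ)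
    (hsymm : ∀ i j, a i j = a j i)
    (h01 : ∀ i j, a i j = 0 ∨ a i j = 1)
    (hdiag : ∀ i, a i i = 0)
    (hdeg : ∀ i, 0 < deg N a i)
    (Bmat : Matrix (Fin N) (Fin N) ℝ)
    (hBmat : ∀ i j, Bmat i j = a i j / (Real.sqrt (deg N a i) * Real.sqrt (deg N a j)))
    (hHerm : Bmat.IsHermitian)
    (ev : Fin N → ℝ) (σ : Equiv.Perm (Fin N))
    (hev : ev = hHerm.eigenvalues ∘ σ) (hmono : Antitone ev)
    (lam : ℝ) (hlam : lam = max (ev ⟨1, by omega⟩) (-(ev ⟨N - 1, by omega⟩))) :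
    ∀ A B : Finset (Fin N),
      |eCount N a A B / vol N a Finset.univ -
          (vol N a A / vol N a Finset.univ) * (vol N a B / vol N a Finset.univ)| ≤
        lam * Real.sqrt ((vol N a A / vol N a Finset.univ) *
          (vol N a B / vol N a Finset.univ)) := by
  have hvolpos : 0 < vol N a Finset.univ :=
    Finset.sum_pos (fun i _ => hdeg i) ⟨⟨0, by omega⟩, Finset.mem_univ _⟩
  set W := vol N a Finset.univ with hWdef
  have hWsum : (∑ i, deg N a i) = W := rfl
  have sqd_pos : ∀ i, 0 < Real.sqrt (deg N a i) := fun i => Real.sqrt_pos.2 (hdeg i)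
  have sqW_pos : 0 < Real.sqrt W := Real.sqrt_pos.2 hvolpos
  have hanonneg : ∀ i j, 0 ≤ a i j := fun i j => by rcases h01 i j with h | h <;> simp [h]
  have hBsymm : ∀ i j, Bmat i j = Bmat j i := by
    intro i j; rw [hBmat, hBmat, hsymm, mul_comm]
  set u : Fin N → ℝ := fun i => Real.sqrt (deg N a i) / Real.sqrt W with hudef
  -- u is a unit vector
  have huu : (∑ i, u i * u i) = 1 := by
    have h1 : ∀ i ∈ Finset.univ, u i * u i = deg N a i / W := by
      intro i _
      simp only [hudef, div_mul_div_comm, Real.mul_self_sqrt (hdeg i).le,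
        Real.mul_self_sqrt hvolpos.le]
    rw [Finset.sum_congr rfl h1, ← Finset.sum_div, hWsum]
    exact div_self hvolpos.ne'
  -- u is a 1-eigenvector
  have hBu : ∀ i, (Bmat.mulVec u) i = u i := by
    intro i
    have h1 : ∀ j ∈ Finset.univ,
        Bmat i j * u j = a i j / (Real.sqrt (deg N a i) * Real.sqrt W) := by
      intro j _
      rw [hBmat, hudef]
      show a i j / (Real.sqrt (deg N a i) * Real.sqrt (deg N a j)) *
        (Real.sqrt (deg N a j) / Real.sqrt W) = _
      rw [div_mul_div_comm, div_eq_div_iff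
        (mul_pos (mul_pos (sqd_pos i) (sqd_pos j)) sqW_pos).ne'
        (mul_pos (sqd_pos i) sqW_pos).ne']
      ring
    show (∑ j, Bmat i j * u j) = u i
    rw [Finset.sum_congr rfl h1, ← Finset.sum_div]
    show (deg N a i) / _ = _
    rw [hudef]
    show deg N a i / (Real.sqrt (deg N a i) * Real.sqrt W) = Real.sqrt (deg N a i) / Real.sqrt W
    rw [div_eq_div_iff (mul_pos (sqd_pos i) sqW_pos).ne' sqW_pos.ne']
    linear_combination (-Real.sqrt W) * Real.mul_self_sqrt (hdeg i).le
  -- symmetry of the bilinear form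
  have hBdot : ∀ x y : Fin N → ℝ,
      (∑ i, x i * (Bmat.mulVec y) i) = ∑ i, y i * (Bmat.mulVec x) i := by
    intro x y
    simp only [Matrix.mulVec, dotProduct, Finset.mul_sum]
    rw [Finset.sum_comm]
    refine Finset.sum_congr rfl fun i _ => Finset.sum_congr rfl fun j _ => ?_
    rw [hBsymm j i]; ring
  -- Rayleigh quotient at most 1
  have hQF1 : ∀ x : Fin N → ℝ,
      (∑ i, x i * (Bmat.mulVec x) i) ≤ ∑ i, x i * x i := by
    intro x
    set y : Fin N → ℝ := fun i => x i / Real.sqrt (deg N a i) with hydef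
    have hx : ∀ i, x i = Real.sqrt (deg N a i) * y i := by
      intro i
      rw [hydef, mul_comm, div_mul_cancel₀ _ (sqd_pos i).ne']
    have e1 : (∑ i, x i * x i) = ∑ i, deg N a i * (y i * y i) := by
      refine Finset.sum_congr rfl fun i _ => ?_
      rw [hx i]
      linear_combination (y i * y i) * Real.mul_self_sqrt (hdeg i).le
    have e2 : (∑ i, x i * (Bmat.mulVec x) i) = ∑ i, ∑ j, a i j * (y i * y j) := by
      refine Finset.sum_congr rfl fun i _ => ?_
      show x i * (∑ j, Bmat i j * x j) = _
      rw [Finset.mul_sum]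
      refine Finset.sum_congr rfl fun j _ => ?_
      rw [hx i, hx j, hBmat]
      field_simp [(sqd_pos i).ne', (sqd_pos j).ne']
    have S1 : (∑ i, ∑ j, a i j * (y i * y i)) = ∑ i, deg N a i * (y i * y i) := by
      refine Finset.sum_congr rfl fun i _ => ?_
      rw [← Finset.sum_mul]
      rfl
    have S2 : (∑ i, ∑ j, a i j * (y j * y j)) = ∑ i, deg N a i * (y i * y i) := by
      rw [Finset.sum_comm]
      refine Finset.sum_congr rfl fun j _ => ?_
      have h : ∀ i ∈ Finset.univ, a i j * (y j * y j) = a j i * (y j * y j) :=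
        fun i _ => by rw [hsymm]
      rw [Finset.sum_congr rfl h, ← Finset.sum_mul]
      rfl
    have key : 0 ≤ ∑ i, ∑ j, a i j * (y i - y j) ^ 2 :=
      Finset.sum_nonneg fun i _ => Finset.sum_nonneg fun j _ =>
        mul_nonneg (hanonneg i j) (sq_nonneg _)
    have expand : (∑ i, ∑ j, a i j * (y i - y j) ^ 2)
        = (∑ i, ∑ j, a i j * (y i * y i)) + (∑ i, ∑ j, a i j * (y j * y j))
          - 2 * (∑ i, ∑ j, a i j * (y i * y j)) := by
      calc (∑ i, ∑ j, a i j * (y i - y j) ^ 2)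
          = ∑ i, ∑ j, (a i j * (y i * y i) + a i j * (y j * y j)
              - 2 * (a i j * (y i * y j))) :=
            Finset.sum_congr rfl fun i _ => Finset.sum_congr rfl fun j _ => by ring
        _ = _ := by
            simp only [Finset.sum_add_distrib, Finset.sum_sub_distrib, ← Finset.mul_sum]
    rw [e1, e2]
    rw [S1, S2] at expand
    linarith
  -- spectral data
  set μ : Fin N → ℝ := hHerm.eigenvalues with hμdef
  set v : Fin N → Fin N → ℝ := fun k i => hHerm.eigenvectorBasis k i with hvdef
  have horth : ∀ k l, (∑ i, v k i * v l i) = (if k = l then (1:ℝ) else 0) := by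
    intro k l
    have h := orthonormal_iff_ite.mp hHerm.eigenvectorBasis.orthonormal k l
    rw [PiLp.inner_apply] at h
    simpa [hvdef, mul_comm] using h
  have hrepr : ∀ (w : Fin N → ℝ) (i : Fin N),
      w i = ∑ k, (∑ j, v k j * w j) * v k i := by
    intro w i
    have h := hHerm.eigenvectorBasis.sum_repr' ((WithLp.equiv 2 _).symm w)
    have h2 := congrArg (fun x => x.ofLp i) h
    simp only [WithLp.ofLp_sum, WithLp.ofLp_smul, Finset.sum_apply, Pi.smul_apply, smul_eq_mul,
      PiLp.inner_apply, RCLike.inner_apply, starRingEnd_apply, star_trivial,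
      WithLp.equiv_symm_apply] at h2
    rw [hvdef]
    rw [← h2]
    refine Finset.sum_congr rfl fun k _ => ?_
    congr 1
    exact Finset.sum_congr rfl fun j _ => mul_comm _ _
  have hBv : ∀ k i, (Bmat.mulVec (v k)) i = μ k * v k i := by
    intro k i
    have h := congrFun (hHerm.mulVec_eigenvectorBasis k) i
    simpa [hvdef, hμdef, Pi.smul_apply] using h
  -- coefficient function
  set co : (Fin N → ℝ) → Fin N → ℝ := fun w k => ∑ j, v k j * w j with hcodef
  have hco' : ∀ (w : Fin N → ℝ) k, (∑ j, w j * v k j) = co w k := by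
    intro w k
    rw [hcodef]
    exact Finset.sum_congr rfl fun j _ => mul_comm _ _
  -- Parseval
  have hPar : ∀ w : Fin N → ℝ, (∑ i, w i * w i) = ∑ k, co w k ^ 2 := by
    intro w
    calc (∑ i, w i * w i) = ∑ i, w i * ∑ k, co w k * v k i := by
          refine Finset.sum_congr rfl fun i _ => ?_
          rw [← hrepr w i]
      _ = ∑ k, co w k * ∑ i, w i * v k i := by
          simp only [Finset.mul_sum]
          rw [Finset.sum_comm]
          exact Finset.sum_congr rfl fun k _ => Finset.sum_congr rfl fun i _ => by ring
      _ = ∑ k, co w k ^ 2 := by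
          refine Finset.sum_congr rfl fun k _ => ?_
          rw [hco' w k]; ring
  -- quadratic form in coordinates
  have hQuad : ∀ w : Fin N → ℝ,
      (∑ i, w i * (Bmat.mulVec w) i) = ∑ k, μ k * co w k ^ 2 := by
    intro w
    have hBw : ∀ i, (Bmat.mulVec w) i = ∑ k, co w k * (μ k * v k i) := by
      intro i
      show (∑ j, Bmat i j * w j) = _
      calc (∑ j, Bmat i j * w j) = ∑ j, Bmat i j * ∑ k, co w k * v k j := by
            refine Finset.sum_congr rfl fun j _ => ?_
            rw [← hrepr w j]
        _ = ∑ k, co w k * ∑ j, Bmat i j * v k j := by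
            simp only [Finset.mul_sum]
            rw [Finset.sum_comm]
            exact Finset.sum_congr rfl fun k _ => Finset.sum_congr rfl fun j _ => by ring
        _ = ∑ k, co w k * (μ k * v k i) := by
            refine Finset.sum_congr rfl fun k _ => ?_
            rw [show (∑ j, Bmat i j * v k j) = (Bmat.mulVec (v k)) i from rfl, hBv]
    calc (∑ i, w i * (Bmat.mulVec w) i)
        = ∑ i, ∑ k, w i * (co w k * (μ k * v k i)) := by
          refine Finset.sum_congr rfl fun i _ => ?_
          rw [hBw i, Finset.mul_sum]
      _ = ∑ k, μ k * co w k * ∑ i, w i * v k i := by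
          simp only [Finset.mul_sum]
          rw [Finset.sum_comm]
          exact Finset.sum_congr rfl fun k _ => Finset.sum_congr rfl fun i _ => by ring
      _ = ∑ k, μ k * co w k ^ 2 := by
          refine Finset.sum_congr rfl fun k _ => ?_
          rw [hco' w k]; ring
  -- eigenvalues at most 1
  have hvv : ∀ k, (∑ i, v k i * v k i) = 1 := fun k => by
    have := horth k k; simpa using this
  have hμle1 : ∀ k, μ k ≤ 1 := by
    intro k
    have h := hQF1 (v k)
    have h2 : (∑ i, v k i * (Bmat.mulVec (v k)) i) = μ k := by
      calc (∑ i, v k i * (Bmat.mulVec (v k)) i) = ∑ i, μ k * (v k i * v k i) := by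
            exact Finset.sum_congr rfl fun i _ => by rw [hBv]; ring
        _ = μ k := by rw [← Finset.mul_sum, hvv k, mul_one]
    rw [h2, hvv k] at h
    exact h
  -- ordering facts
  have hμev : ∀ k, μ k = ev (σ.symm k) := by
    intro k; rw [hev]; simp
  have hev1 : ∀ k, σ.symm k ≠ ⟨0, by omega⟩ → μ k ≤ ev ⟨1, by omega⟩ := by
    intro k hk
    rw [hμev k]
    apply hmono
    rw [Fin.le_def]
    have : (σ.symm k).val ≠ 0 := fun h => hk (Fin.ext h)
    simp only [Fin.val_mk]
    omega
  have hevN : ∀ k, ev ⟨N - 1, by omega⟩ ≤ μ k := by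
    intro k
    rw [hμev k]
    apply hmono
    rw [Fin.le_def]
    have := (σ.symm k).isLt
    simp only [Fin.val_mk]
    omega
  have hlam0 : 0 ≤ lam := by
    rcases le_or_gt 0 (ev ⟨1, by omega⟩) with h | h
    · exact le_trans h (by rw [hlam]; exact le_max_left _ _)
    · have h1 : ev ⟨N - 1, by omega⟩ ≤ ev ⟨1, by omega⟩ := by
        apply hmono
        rw [Fin.le_def]; simp only [Fin.val_mk]; omega
      rw [hlam]
      have : 0 ≤ -(ev ⟨N - 1, by omega⟩) := by linarith
      exact le_trans this (le_max_right _ _)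
  have hev1lam : ev ⟨1, by omega⟩ ≤ lam := by rw [hlam]; exact le_max_left _ _
  have hevNlam : -lam ≤ ev ⟨N - 1, by omega⟩ := by
    rw [hlam]
    have := le_max_right (ev ⟨1, by omega⟩) (-(ev ⟨N - 1, by omega⟩))
    linarith
  -- lower bound for the quadratic form
  have hlow : ∀ w : Fin N → ℝ,
      (-lam) * (∑ i, w i * w i) ≤ ∑ i, w i * (Bmat.mulVec w) i := by
    intro w
    rw [hQuad w, hPar w, Finset.mul_sum]
    refine Finset.sum_le_sum fun k _ => ?_
    have h1 : -lam ≤ μ k := le_trans (hevNlam) (hevN k)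
    nlinarith [sq_nonneg (co w k)]
  -- upper bound for the quadratic form on u-orthogonal vectors
  have hupp : ∀ w : Fin N → ℝ, (∑ i, w i * u i) = 0 →
      (∑ i, w i * (Bmat.mulVec w) i) ≤ lam * (∑ i, w i * w i) := by
    intro w hwu
    have hbu : ∀ k, μ k * co u k = co u k := by
      intro k
      have h1 : (∑ j, v k j * (Bmat.mulVec u) j) = co u k :=
        Finset.sum_congr rfl fun j _ => by rw [hBu j]
      have h2 : (∑ j, v k j * (Bmat.mulVec u) j) = μ k * co u k := by
        rw [hBdot (v k) u]
        calc (∑ j, u j * (Bmat.mulVec (v k)) j) = ∑ j, μ k * (v k j * u j) :=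
              Finset.sum_congr rfl fun j _ => by rw [hBv k j]; ring
          _ = μ k * co u k := by rw [← Finset.mul_sum]
      rw [← h2, h1]
    have hcou_sq : (∑ k, co u k ^ 2) = 1 := by rw [← hPar u, huu]
    have hex : ∃ k0, co u k0 ≠ 0 := by
      by_contra h
      push_neg at h
      have h0 : (∑ k, co u k ^ 2) = 0 :=
        Finset.sum_eq_zero fun k _ => by rw [h k]; ring
      rw [hcou_sq] at h0
      norm_num at h0
    obtain ⟨k0, hk0⟩ := hex
    have hμk0 : μ k0 = 1 := by
      have h2 : (μ k0 - 1) * co u k0 = 0 := by linarith [hbu k0]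
      rcases mul_eq_zero.1 h2 with h | h
      · linarith
      · exact absurd h hk0
    have hClaim : ∀ k, ev ⟨1, by omega⟩ < μ k → co w k = 0 := by
      intro k hk
      have hσk : σ.symm k = ⟨0, by omega⟩ := by
        by_contra h'
        exact absurd (hev1 k h') (not_le.2 hk)
      have hkk0 : k0 = k := by
        have hσk0 : σ.symm k0 = ⟨0, by omega⟩ := by
          by_contra h'
          have h1 := hev1 k0 h'
          rw [hμk0] at h1
          have h2 := hμle1 k
          linarith
        exact σ.symm.injective (hσk0.trans hσk.symm)
      have hbzero : ∀ l, l ≠ k → co u l = 0 := by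
        intro l hl
        by_contra h
        have hμl : μ l = 1 := by
          have h2 : (μ l - 1) * co u l = 0 := by linarith [hbu l]
          rcases mul_eq_zero.1 h2 with h' | h'
          · linarith
          · exact absurd h' h
        have hσl : σ.symm l = ⟨0, by omega⟩ := by
          by_contra h'
          have h1 := hev1 l h'
          rw [hμl] at h1
          have h2 := hμle1 k
          linarith
        exact hl (σ.symm.injective (hσl.trans hσk.symm))
      have hdot : (∑ i, w i * u i) = ∑ l, co u l * co w l := by
        calc (∑ i, w i * u i) = ∑ i, w i * ∑ l, co u l * v l i := by
              refine Finset.sum_congr rfl fun i _ => ?_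
              rw [← hrepr u i]
          _ = ∑ l, co u l * ∑ i, w i * v l i := by
              simp only [Finset.mul_sum]
              rw [Finset.sum_comm]
              exact Finset.sum_congr rfl fun l _ => Finset.sum_congr rfl fun i _ => by ring
          _ = ∑ l, co u l * co w l :=
              Finset.sum_congr rfl fun l _ => by rw [hco' w l]
      have hsingle : (∑ l, co u l * co w l) = co u k * co w k :=
        Finset.sum_eq_single k (fun l _ hl => by rw [hbzero l hl]; ring)
          (fun h => absurd (Finset.mem_univ k) h)
      have hzero : co u k * co w k = 0 := by
        rw [← hsingle, ← hdot]
        exact hwu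
      rcases mul_eq_zero.1 hzero with h | h
      · rw [hkk0] at hk0
        exact absurd h hk0
      · exact h
    rw [hQuad w, hPar w, Finset.mul_sum]
    refine Finset.sum_le_sum fun k _ => ?_
    rcases le_or_gt (μ k) (ev ⟨1, by omega⟩) with h | h
    · have h2 : μ k ≤ lam := le_trans h hev1lam
      nlinarith [sq_nonneg (co w k)]
    · rw [hClaim k h]
      norm_num
  -- quadratic form bound for M = B - u uᵀ
  have hM : ∀ z : Fin N → ℝ,
      |(∑ i, z i * (Bmat.mulVec z) i) - (∑ i, z i * u i) ^ 2|
        ≤ lam * (∑ i, z i * z i) := by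
    intro z
    set t := ∑ i, z i * u i with htdef
    set w : Fin N → ℝ := fun i => z i - t * u i with hwdef
    have hBw : ∀ i, (Bmat.mulVec w) i = (Bmat.mulVec z) i - t * u i := by
      intro i
      show (∑ j, Bmat i j * w j) = _
      have h : ∀ j ∈ Finset.univ,
          Bmat i j * w j = Bmat i j * z j - t * (Bmat i j * u j) := fun j _ => by
        rw [hwdef]; ring
      rw [Finset.sum_congr rfl h, Finset.sum_sub_distrib, ← Finset.mul_sum]
      rw [show (∑ j, Bmat i j * u j) = (Bmat.mulVec u) i from rfl, hBu i]
      rfl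
    have huBz : (∑ i, u i * (Bmat.mulVec z) i) = t := by
      rw [hBdot u z]
      calc (∑ i, z i * (Bmat.mulVec u) i) = ∑ i, z i * u i :=
            Finset.sum_congr rfl fun i _ => by rw [hBu i]
        _ = t := rfl
    have hwu : (∑ i, w i * u i) = 0 := by
      have h : ∀ i ∈ Finset.univ,
          w i * u i = z i * u i - t * (u i * u i) := fun i _ => by
        rw [hwdef]; ring
      rw [Finset.sum_congr rfl h, Finset.sum_sub_distrib, ← Finset.mul_sum, huu, ← htdef]
      ring
    have hwBw : (∑ i, w i * (Bmat.mulVec w) i)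
        = (∑ i, z i * (Bmat.mulVec z) i) - t ^ 2 := by
      have h : ∀ i ∈ Finset.univ, w i * (Bmat.mulVec w) i
          = z i * (Bmat.mulVec z) i - t * (u i * (Bmat.mulVec z) i)
            - t * (z i * u i) + t ^ 2 * (u i * u i) := fun i _ => by
        rw [hBw i, hwdef]; ring
      rw [Finset.sum_congr rfl h]
      simp only [Finset.sum_add_distrib, Finset.sum_sub_distrib, ← Finset.mul_sum]
      rw [huBz, huu, ← htdef]
      ring
    have hww : (∑ i, w i * w i) = (∑ i, z i * z i) - t ^ 2 := by
      have h : ∀ i ∈ Finset.univ, w i * w i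
          = z i * z i - t * (z i * u i) - t * (z i * u i) + t ^ 2 * (u i * u i) :=
        fun i _ => by rw [hwdef]; ring
      rw [Finset.sum_congr rfl h]
      simp only [Finset.sum_add_distrib, Finset.sum_sub_distrib, ← Finset.mul_sum]
      rw [huu, ← htdef]
      ring
    have hww0 : 0 ≤ ∑ i, w i * w i :=
      Finset.sum_nonneg fun i _ => mul_self_nonneg _
    have hle : (∑ i, w i * w i) ≤ ∑ i, z i * z i := by
      rw [hww]; nlinarith [sq_nonneg t]
    have hmul : lam * (∑ i, w i * w i) ≤ lam * (∑ i, z i * z i) :=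
      mul_le_mul_of_nonneg_left hle hlam0
    rw [abs_le]
    constructor
    · have h1 := hlow w
      rw [hwBw] at h1
      linarith
    · have h1 := hupp w hwu
      rw [hwBw] at h1
      linarith
  -- bilinear form
  set F : (Fin N → ℝ) → (Fin N → ℝ) → ℝ := fun x y =>
    (∑ i, x i * (Bmat.mulVec y) i) - (∑ i, x i * u i) * (∑ i, y i * u i) with hFdef
  have hFdef' : ∀ x y : Fin N → ℝ, F x y =
      (∑ i, x i * (Bmat.mulVec y) i) - (∑ i, x i * u i) * (∑ i, y i * u i) :=
    fun x y => rfl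
  have hFsymm : ∀ x y, F x y = F y x := by
    intro x y
    rw [hFdef' x y, hFdef' y x, hBdot x y]
    ring
  have hFq : ∀ z, |F z z| ≤ lam * (∑ i, z i * z i) := by
    intro z
    rw [hFdef' z z, show (∑ i, z i * u i) * (∑ i, z i * u i) = (∑ i, z i * u i) ^ 2 by ring]
    exact hM z
  have hBadd : ∀ (c : ℝ) (x y : Fin N → ℝ) (i : Fin N),
      (Bmat.mulVec (fun j => x j + c * y j)) i
        = (Bmat.mulVec x) i + c * (Bmat.mulVec y) i := by
    intro c x y i
    show (∑ j, Bmat i j * (x j + c * y j)) = _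
    have h : ∀ j ∈ Finset.univ, Bmat i j * (x j + c * y j)
        = Bmat i j * x j + c * (Bmat i j * y j) := fun j _ => by ring
    rw [Finset.sum_congr rfl h, Finset.sum_add_distrib, ← Finset.mul_sum]
    rfl
  have hFadd : ∀ (c : ℝ) (x y : Fin N → ℝ),
      F (fun i => x i + c * y i) (fun i => x i + c * y i)
        = F x x + 2 * c * F x y + c ^ 2 * F y y := by
    intro c x y
    have e1 : (∑ i, (x i + c * y i) * (Bmat.mulVec (fun j => x j + c * y j)) i)
        = (∑ i, x i * (Bmat.mulVec x) i) + c * (∑ i, x i * (Bmat.mulVec y) i)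
          + c * (∑ i, y i * (Bmat.mulVec x) i)
          + c ^ 2 * (∑ i, y i * (Bmat.mulVec y) i) := by
      have h : ∀ i ∈ Finset.univ, (x i + c * y i) * (Bmat.mulVec (fun j => x j + c * y j)) i
          = x i * (Bmat.mulVec x) i + c * (x i * (Bmat.mulVec y) i)
            + c * (y i * (Bmat.mulVec x) i) + c ^ 2 * (y i * (Bmat.mulVec y) i) :=
        fun i _ => by rw [hBadd c x y i]; ring
      rw [Finset.sum_congr rfl h]
      simp only [Finset.sum_add_distrib, ← Finset.mul_sum]
    have e2 : (∑ i, (x i + c * y i) * u i)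
        = (∑ i, x i * u i) + c * (∑ i, y i * u i) := by
      have h : ∀ i ∈ Finset.univ, (x i + c * y i) * u i
          = x i * u i + c * (y i * u i) := fun i _ => by ring
      rw [Finset.sum_congr rfl h, Finset.sum_add_distrib, ← Finset.mul_sum]
    rw [hFdef', hFdef', hFdef', hFdef', e1, e2, hBdot y x]
    ring
  have hdotadd : ∀ (c : ℝ) (x y : Fin N → ℝ),
      (∑ i, (x i + c * y i) * (x i + c * y i))
        = (∑ i, x i * x i) + 2 * c * (∑ i, x i * y i) + c ^ 2 * (∑ i, y i * y i) := by
    intro c x y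
    have h : ∀ i ∈ Finset.univ, (x i + c * y i) * (x i + c * y i)
        = x i * x i + 2 * c * (x i * y i) + c ^ 2 * (y i * y i) := fun i _ => by ring
    rw [Finset.sum_congr rfl h]
    simp only [Finset.sum_add_distrib, ← Finset.mul_sum]
  have hbil2 : ∀ x y : Fin N → ℝ,
      |F x y| ≤ lam / 2 * ((∑ i, x i * x i) + (∑ i, y i * y i)) := by
    intro x y
    have h1 := hFq (fun i => x i + 1 * y i)
    have h2 := hFq (fun i => x i + (-1) * y i)
    rw [hFadd 1 x y, hdotadd 1 x y] at h1
    rw [hFadd (-1) x y, hdotadd (-1) x y] at h2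
    rw [abs_le] at h1 h2 ⊢
    obtain ⟨h1l, h1r⟩ := h1
    obtain ⟨h2l, h2r⟩ := h2
    set P1 := F x x with hP1
    set P2 := F x y with hP2
    set P3 := F y y with hP3
    set Q1 := ∑ i, x i * x i with hQ1
    set Q2 := ∑ i, x i * y i with hQ2
    set Q3 := ∑ i, y i * y i with hQ3
    clear_value P1 P2 P3 Q1 Q2 Q3
    constructor
    · linarith
    · linarith
  have hFsc1 : ∀ (s : ℝ) (x y : Fin N → ℝ), F (fun i => s * x i) y = s * F x y := by
    intro s x y
    rw [hFdef', hFdef']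
    have e1 : (∑ i, s * x i * (Bmat.mulVec y) i) = s * ∑ i, x i * (Bmat.mulVec y) i := by
      rw [Finset.mul_sum]
      exact Finset.sum_congr rfl fun i _ => by ring
    have e2 : (∑ i, s * x i * u i) = s * ∑ i, x i * u i := by
      rw [Finset.mul_sum]
      exact Finset.sum_congr rfl fun i _ => by ring
    rw [e1, e2]
    ring
  have hFsc2 : ∀ (s : ℝ) (x y : Fin N → ℝ), F x (fun i => s * y i) = s * F x y := by
    intro s x y
    rw [hFsymm x (fun i => s * y i), hFsc1 s y x, hFsymm y x]
  have hFzero : ∀ x y : Fin N → ℝ, (∀ i, x i = 0) → F x y = 0 := by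
    intro x y hx
    rw [hFdef']
    rw [Finset.sum_eq_zero fun i _ => by rw [hx i]; ring,
      Finset.sum_eq_zero (f := fun i => x i * u i) fun i _ => by
        show x i * u i = 0
        rw [hx i]; ring]
    ring
  have hbil : ∀ x y : Fin N → ℝ,
      |F x y| ≤ lam * Real.sqrt (∑ i, x i * x i) * Real.sqrt (∑ i, y i * y i) := by
    intro x y
    have hX0 : 0 ≤ ∑ i, x i * x i := Finset.sum_nonneg fun i _ => mul_self_nonneg _
    have hY0 : 0 ≤ ∑ i, y i * y i := Finset.sum_nonneg fun i _ => mul_self_nonneg _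
    rcases eq_or_lt_of_le hX0 with hX | hX
    · have hx : ∀ i, x i = 0 := by
        intro i
        have h := (Finset.sum_eq_zero_iff_of_nonneg
          (fun i _ => mul_self_nonneg (x i))).mp hX.symm i (Finset.mem_univ i)
        exact mul_self_eq_zero.mp h
      rw [hFzero x y hx]
      simp only [abs_zero]
      positivity
    rcases eq_or_lt_of_le hY0 with hY | hY
    · have hy : ∀ i, y i = 0 := by
        intro i
        have h := (Finset.sum_eq_zero_iff_of_nonneg
          (fun i _ => mul_self_nonneg (y i))).mp hY.symm i (Finset.mem_univ i)
        exact mul_self_eq_zero.mp h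
      rw [hFsymm, hFzero y x hy]
      simp only [abs_zero]
      positivity
    · set sX := Real.sqrt (∑ i, x i * x i) with hsX
      set sY := Real.sqrt (∑ i, y i * y i) with hsY
      have hsX0 : 0 < sX := Real.sqrt_pos.2 hX
      have hsY0 : 0 < sY := Real.sqrt_pos.2 hY
      have hxx : ∀ i, x i = sX * (x i / sX) := fun i => by
        rw [mul_div_cancel₀ _ hsX0.ne']
      have hyy : ∀ i, y i = sY * (y i / sY) := fun i => by
        rw [mul_div_cancel₀ _ hsY0.ne']
      have hFval : F x y = sX * (sY * F (fun i => x i / sX) (fun i => y i / sY)) := by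
        calc F x y = F (fun i => sX * (x i / sX)) (fun i => sY * (y i / sY)) := by
              congr 1 <;> funext i
              · exact hxx i
              · exact hyy i
          _ = sX * (sY * F (fun i => x i / sX) (fun i => y i / sY)) := by
              rw [hFsc1, hFsc2]
      have hXnorm : (∑ i, (x i / sX) * (x i / sX)) = 1 := by
        have h : ∀ i ∈ Finset.univ, (x i / sX) * (x i / sX) = x i * x i / (∑ j, x j * x j) := by
          intro i _
          rw [div_mul_div_comm, hsX, Real.mul_self_sqrt hX0]
        rw [Finset.sum_congr rfl h, ← Finset.sum_div]
        exact div_self hX.ne'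
      have hYnorm : (∑ i, (y i / sY) * (y i / sY)) = 1 := by
        have h : ∀ i ∈ Finset.univ, (y i / sY) * (y i / sY) = y i * y i / (∑ j, y j * y j) := by
          intro i _
          rw [div_mul_div_comm, hsY, Real.mul_self_sqrt hY0]
        rw [Finset.sum_congr rfl h, ← Finset.sum_div]
        exact div_self hY.ne'
      have hb := hbil2 (fun i => x i / sX) (fun i => y i / sY)
      rw [hXnorm, hYnorm] at hb
      rw [hFval, abs_mul, abs_mul, abs_of_pos hsX0, abs_of_pos hsY0]
      calc sX * (sY * |F (fun i => x i / sX) (fun i => y i / sY)|)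
          ≤ sX * (sY * lam) := by
            have : |F (fun i => x i / sX) (fun i => y i / sY)| ≤ lam := by
              calc |F (fun i => x i / sX) (fun i => y i / sY)| ≤ lam / 2 * (1 + 1) := hb
                _ = lam := by ring
            exact mul_le_mul_of_nonneg_left
              (mul_le_mul_of_nonneg_left this hsY0.le) hsX0.le
        _ = lam * sX * sY := by ring
  -- conclude
  intro A B
  set φA : Fin N → ℝ := fun i => if i ∈ A then Real.sqrt (deg N a i) else 0 with hφA
  set φB : Fin N → ℝ := fun i => if i ∈ B then Real.sqrt (deg N a i) else 0 with hφB
  have hvolA0 : 0 ≤ vol N a A := Finset.sum_nonneg fun i _ => (hdeg i).le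
  have hvolB0 : 0 ≤ vol N a B := Finset.sum_nonneg fun i _ => (hdeg i).le
  have hXA : (∑ i, φA i * φA i) = vol N a A := by
    have h : ∀ i ∈ Finset.univ, φA i * φA i = if i ∈ A then deg N a i else 0 := by
      intro i _
      by_cases h : i ∈ A <;> simp only [hφA, h, if_true, if_false, mul_zero]
      exact Real.mul_self_sqrt (hdeg i).le
    rw [Finset.sum_congr rfl h, Finset.sum_ite_mem, Finset.univ_inter]
    rfl
  have hXB : (∑ i, φB i * φB i) = vol N a B := by
    have h : ∀ i ∈ Finset.univ, φB i * φB i = if i ∈ B then deg N a i else 0 := by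
      intro i _
      by_cases h : i ∈ B <;> simp only [hφB, h, if_true, if_false, mul_zero]
      exact Real.mul_self_sqrt (hdeg i).le
    rw [Finset.sum_congr rfl h, Finset.sum_ite_mem, Finset.univ_inter]
    rfl
  have hφAu : (∑ i, φA i * u i) = vol N a A / Real.sqrt W := by
    have h : ∀ i ∈ Finset.univ, φA i * u i
        = if i ∈ A then deg N a i / Real.sqrt W else 0 := by
      intro i _
      by_cases h : i ∈ A <;>
        simp only [hφA, hudef, h, if_true, if_false, zero_mul]
      rw [← mul_div_assoc, Real.mul_self_sqrt (hdeg i).le]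
    rw [Finset.sum_congr rfl h, Finset.sum_ite_mem, Finset.univ_inter, ← Finset.sum_div]
    rfl
  have hφBu : (∑ i, φB i * u i) = vol N a B / Real.sqrt W := by
    have h : ∀ i ∈ Finset.univ, φB i * u i
        = if i ∈ B then deg N a i / Real.sqrt W else 0 := by
      intro i _
      by_cases h : i ∈ B <;>
        simp only [hφB, hudef, h, if_true, if_false, zero_mul]
      rw [← mul_div_assoc, Real.mul_self_sqrt (hdeg i).le]
    rw [Finset.sum_congr rfl h, Finset.sum_ite_mem, Finset.univ_inter, ← Finset.sum_div]
    rfl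
  have hφAB : (∑ i, φA i * (Bmat.mulVec φB) i) = eCount N a A B := by
    have step2 : ∀ i j, φA i * (Bmat i j * φB j)
        = if i ∈ A then (if j ∈ B then a i j else 0) else 0 := by
      intro i j
      by_cases hi : i ∈ A <;> by_cases hj : j ∈ B <;>
        simp only [hφA, hφB, hBmat, hi, hj, if_true, if_false, mul_zero, zero_mul]
      field_simp
      rw [div_eq_iff (mul_pos (sqd_pos i) (sqd_pos j)).ne']
      ring
    calc (∑ i, φA i * (Bmat.mulVec φB) i)
        = ∑ i, ∑ j, (if i ∈ A then (if j ∈ B then a i j else 0) else 0) := by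
          refine Finset.sum_congr rfl fun i _ => ?_
          rw [show φA i * (Bmat.mulVec φB) i = φA i * ∑ j, Bmat i j * φB j from rfl,
            Finset.mul_sum]
          exact Finset.sum_congr rfl fun j _ => by rw [← mul_assoc, mul_assoc, step2 i j]
      _ = ∑ i, (if i ∈ A then (∑ j, if j ∈ B then a i j else 0) else 0) := by
          refine Finset.sum_congr rfl fun i _ => ?_
          by_cases hi : i ∈ A <;> simp [hi]
      _ = ∑ i ∈ A, ∑ j, (if j ∈ B then a i j else 0) := by
          rw [Finset.sum_ite_mem, Finset.univ_inter]
      _ = ∑ i ∈ A, ∑ j ∈ B, a i j := by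
          refine Finset.sum_congr rfl fun i _ => ?_
          rw [Finset.sum_ite_mem, Finset.univ_inter]
      _ = eCount N a A B := rfl
  have hbilAB := hbil φA φB
  rw [hXA, hXB] at hbilAB
  have hFval : F φA φB = eCount N a A B - vol N a A * vol N a B / W := by
    rw [hFdef' φA φB, hφAB, hφAu, hφBu, div_mul_div_comm,
      Real.mul_self_sqrt hvolpos.le]
  have hlhs : eCount N a A B / W - vol N a A / W * (vol N a B / W) = F φA φB / W := by
    rw [hFval]
    field_simp
  rw [hlhs, abs_div, abs_of_pos hvolpos]
  have hRHS : Real.sqrt (vol N a A / W * (vol N a B / W))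
      = Real.sqrt (vol N a A) * Real.sqrt (vol N a B) / W := by
    rw [show vol N a A / W * (vol N a B / W) = vol N a A * vol N a B / (W * W) by ring]
    rw [Real.sqrt_div (mul_nonneg hvolA0 hvolB0), Real.sqrt_mul hvolA0,
      Real.sqrt_mul_self hvolpos.le]
  rw [hRHS]
  have hb2 : |F φA φB| ≤ lam * (Real.sqrt (vol N a A) * Real.sqrt (vol N a B)) := by
    rw [← mul_assoc]
    exact hbilAB
  rw [← mul_div_assoc]
  exact div_le_div_of_nonneg_right hb2 hvolpos.le
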